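/- arXiv:2309.13889 — 2 statements merged into one kernel-verified Lean document; each statement's English description precedes it below -/
import Mathlib

section
/- (Theorem 2, Case (i).) Let P ∈ ℝ^{n×n} be symmetric positive definite with nonpositive off-diagonal entries (−P is Metzler), Γ ∈ ℝ^{n×l₂} with Γ ≥ 0, and suppose PA − ΓC₂ ≥ 0, PV_a − ΓV_b ≥ 0, PD_a − ΓD_b ≥ 0 (entrywise). Set L := P⁻¹Γ. Then L ≥ 0, A − LC₂ ≥ 0, V_a − LV_b ≥ 0, D_a − LD_b ≥ 0. Moreover, for any nonnegative sequence e^x_k ∈ ℝⁿ and vectors δ^ρ_k, δ^{ψ₂}_k, δ^v, δ^w, δ^ε ≥ 0 satisfying the error-dynamics equality e^x_{k+1} = |A−LC₂|·e^x_k + δ^ρ_k + |L|·δ^{ψ₂}_k + |Ŵ|·δ^w + (|V_a − LV_b| − |A−LC₂|·|ΛNV₂| + |ΛNV₂|)·δ^v + (|Λ| + |D_a − LD_b| − |A−LC₂|·|Λ|)·δ^ε and the bounds δ^ρ_k ≤ F̄_ρ·e^x_k, δ^{ψ₂}_k ≤ F̄_{ψ₂}·e^x_k, it holds that e^x_{k+1}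 ≤ (Ã − LC̃)·e^x_k + (B̃ − LD̃)·w̃, where Ã := A + F̄_ρ, C̃ := C₂ − F̄_{ψ₂}, B̃ := [V_a + (I−A)|ΛNV₂|, |Ŵ|, D_a + (I−A)|Λ|], D̃ := [V_b − C₂|ΛNV₂|, 0, D_b − C₂|Λ|], and w̃ := (δ^v; δ^w; δ^ε) is the stacked vector. -/
open Matrix

/-- Entrywise nonnegative part `M⁺ = max(M, 0)` of a real matrix. -/
noncomputable def matPos {m n : ℕ} (M : Matrix (Fin m) (Fin n) ℝ) : Matrix (Fin m) (Fin n) ℝ :=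
  Matrix.of fun i j => max (M i j) 0

/-- Entrywise `M⁻ = M⁺ − M`. -/
noncomputable def matNeg {m n : ℕ} (M : Matrix (Fin m) (Fin n) ℝ) : Matrix (Fin m) (Fin n) ℝ :=
  matPos M - M

/-- Entrywise absolute value `|M| = M⁺ + M⁻`. -/
noncomputable def matAbs {m n : ℕ} (M : Matrix (Fin m) (Fin n) ℝ) : Matrix (Fin m) (Fin n) ℝ :=
  matPos M + matNeg M

lemma matAbs_of_nonneg {m n : ℕ} {M : Matrix (Fin m) (Fin n) ℝ}
    (hM : ∀ i j, 0 ≤ M i j) : matAbs M = M := by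
  ext i j
  simp [matAbs, matNeg, matPos, max_eq_left (hM i j)]

lemma mulVec_nonneg {m n : ℕ} {M : Matrix (Fin m) (Fin n) ℝ} {v : Fin n → ℝ}
    (hM : ∀ i j, 0 ≤ M i j) (hv : 0 ≤ v) : 0 ≤ M.mulVec v := by
  intro i
  simp only [Matrix.mulVec, dotProduct, Pi.zero_apply]
  exact Finset.sum_nonneg fun j _ => mul_nonneg (hM i j) (hv j)

lemma mulVec_mono {m n : ℕ} {M : Matrix (Fin m) (Fin n) ℝ} {u v : Fin n → ℝ}
    (hM : ∀ i j, 0 ≤ M i j) (huv : u ≤ v) : M.mulVec u ≤ M.mulVec v := by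
  have := mulVec_nonneg hM (v := v - u) (by intro i; simpa using sub_nonneg.mpr (huv i))
  intro i
  have h := this i
  rw [Matrix.mulVec_sub] at h
  simpa using sub_nonneg.mp (by simpa using h)

/-- A symmetric positive definite matrix with nonpositive off-diagonal entries
(a Stieltjes matrix) maps nonnegative vectors to nonnegative vectors by its inverse. -/
lemma stieltjes_inv_mulVec_nonneg {n : ℕ} {P : Matrix (Fin n) (Fin n) ℝ} (hP : P.PosDef)
    (hPoff : ∀ i j, i ≠ j → P i j ≤ 0) {b : Fin n → ℝ} (hb : 0 ≤ b) :
    0 ≤ P⁻¹.mulVec b := by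
  have hdet : IsUnit P.det := isUnit_iff_ne_zero.mpr hP.det_pos.ne'
  set x : Fin n → ℝ := P⁻¹.mulVec b with hx
  have hPx : P.mulVec x = b := by
    rw [hx, Matrix.mulVec_mulVec, Matrix.mul_nonsing_inv _ hdet, Matrix.one_mulVec]
  -- negative part of x
  set y : Fin n → ℝ := fun i => max (-(x i)) 0 with hy
  have hy0 : ∀ i, 0 ≤ y i := fun i => le_max_right _ _
  intro i0
  simp only [Pi.zero_apply]
  by_contra hcon
  push_neg at hcon
  have hyne : y ≠ 0 := by
    intro h0
    have h1 : y i0 = 0 := congrFun h0 i0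
    have h2 : y i0 = -(x i0) := max_eq_left (by linarith)
    linarith
  -- positive definiteness gives yᵀ P y > 0
  have hquad : 0 < ∑ i, ∑ j, y i * P i j * y j := by
    have := hP.dotProduct_mulVec_pos hyne
    simpa [dotProduct, Matrix.mulVec, Finset.mul_sum, mul_assoc] using this
  -- yᵀ b ≥ 0
  have hyb : 0 ≤ ∑ i, y i * b i :=
    Finset.sum_nonneg fun i _ => mul_nonneg (hy0 i) (hb i)
  -- decompose x = x⁺ − y
  set xp : Fin n → ℝ := fun i => max (x i) 0 with hxp
  have hxdecomp : ∀ i, x i = xp i - y i := fun i =>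
    (max_zero_sub_max_neg_zero_eq_self (x i)).symm
  have hS1 : ∑ i, ∑ j, y i * P i j * xp j ≤ 0 := by
    apply Finset.sum_nonpos
    intro i _
    apply Finset.sum_nonpos
    intro j _
    rcases eq_or_ne i j with rfl | hij
    · have : y i * xp i = 0 := by
        rcases le_or_gt (x i) 0 with h | h
        · have : xp i = 0 := max_eq_right h
          simp [this]
        · have : y i = 0 := max_eq_right (by linarith)
          simp [this]
      have heq : y i * P i i * xp i = P i i * (y i * xp i) := by ring
      rw [heq, this, mul_zero]
    · have hp := hPoff i j hij
      have h1 : 0 ≤ y i * xp j := mul_nonneg (hy0 i) (le_max_right _ _)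
      have heq : y i * P i j * xp j = P i j * (y i * xp j) := by ring
      rw [heq]
      exact mul_nonpos_of_nonpos_of_nonneg hp h1
  -- yᵀ b = yᵀ P x = S1 − yᵀ P y
  have hkey : ∑ i, y i * b i =
      (∑ i, ∑ j, y i * P i j * xp j) - ∑ i, ∑ j, y i * P i j * y j := by
    rw [← hPx]
    rw [← Finset.sum_sub_distrib]
    apply Finset.sum_congr rfl
    intro i _
    rw [← Finset.sum_sub_distrib]
    simp only [Matrix.mulVec, dotProduct]
    rw [Finset.mul_sum]
    apply Finset.sum_congr rfl
    intro j _
    rw [hxdecomp j]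
    ring
  linarith

/-- Entrywise nonnegativity of `P⁻¹ * Q` for a Stieltjes matrix `P` and `Q ≥ 0`. -/
lemma stieltjes_inv_mul_nonneg {n m : ℕ} {P : Matrix (Fin n) (Fin n) ℝ} (hP : P.PosDef)
    (hPoff : ∀ i j, i ≠ j → P i j ≤ 0) {Q : Matrix (Fin n) (Fin m) ℝ}
    (hQ : ∀ i j, 0 ≤ Q i j) : ∀ i j, 0 ≤ (P⁻¹ * Q) i j := by
  intro i j
  have := stieltjes_inv_mulVec_nonneg hP hPoff (b := fun k => Q k j)
    (by intro k; exact hQ k j) i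
  simpa [Matrix.mulVec, Matrix.mul_apply, dotProduct] using this

/-- Theorem 2, Case (i): positivity of the designed gain and the
linear comparison system for the error dynamics. -/
theorem iss_synthesis_case_i
    {n nw nv p1 l2 : ℕ}
    (W : Matrix (Fin n) (Fin nw) ℝ) (G1 : Matrix (Fin n) (Fin p1) ℝ)
    (V1 : Matrix (Fin p1) (Fin nv) ℝ) (V2 : Matrix (Fin l2) (Fin nv) ℝ)
    (C2 : Matrix (Fin l2) (Fin n) ℝ) (S : Matrix (Fin p1) (Fin p1) ℝ)
    (A Λ : Matrix (Fin n) (Fin n) ℝ) (N : Matrix (Fin n) (Fin l2) ℝ)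
    (Va : Matrix (Fin n) (Fin nv) ℝ)
    (hVa : Va = A * Λ * N * V2 + Λ * (1 - N * C2) * G1 * S * V1)
    (Vb : Matrix (Fin l2) (Fin nv) ℝ) (hVb : Vb = (C2 * Λ * N - 1) * V2)
    (Da : Matrix (Fin n) (Fin n) ℝ) (hDa : Da = A * Λ)
    (Db : Matrix (Fin l2) (Fin n) ℝ) (hDb : Db = C2 * Λ)
    (What : Matrix (Fin n) (Fin nw) ℝ) (hWhat : What = Λ * (1 - N * C2) * W)
    (Fρ : Matrix (Fin n) (Fin n) ℝ) (Fψ2 : Matrix (Fin l2) (Fin n) ℝ)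
    (hFρ : ∀ i j, 0 ≤ Fρ i j) (hFψ2 : ∀ i j, 0 ≤ Fψ2 i j)
    (P : Matrix (Fin n) (Fin n) ℝ) (hP : P.PosDef)
    (hPoff : ∀ i j, i ≠ j → P i j ≤ 0)
    (Γ : Matrix (Fin n) (Fin l2) ℝ) (hΓ : ∀ i j, 0 ≤ Γ i j)
    (hPA : ∀ i j, 0 ≤ (P * A - Γ * C2) i j)
    (hPVa : ∀ i j, 0 ≤ (P * Va - Γ * Vb) i j)
    (hPDa : ∀ i j, 0 ≤ (P * Da - Γ * Db) i j)
    (L : Matrix (Fin n) (Fin l2) ℝ) (hL : L = P⁻¹ * Γ) :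
    (∀ i j, 0 ≤ L i j) ∧
    (∀ i j, 0 ≤ (A - L * C2) i j) ∧
    (∀ i j, 0 ≤ (Va - L * Vb) i j) ∧
    (∀ i j, 0 ≤ (Da - L * Db) i j) ∧
    (∀ (e : ℕ → Fin n → ℝ) (δρ : ℕ → Fin n → ℝ) (δψ2 : ℕ → Fin l2 → ℝ)
      (δv : Fin nv → ℝ) (δw : Fin nw → ℝ) (δε : Fin n → ℝ),
      (∀ k, 0 ≤ e k) → (∀ k, 0 ≤ δρ k) → (∀ k, 0 ≤ δψ2 k) →
      0 ≤ δv → 0 ≤ δw → 0 ≤ δε →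
      (∀ k, e (k + 1) =
        (matAbs (A - L * C2)).mulVec (e k) + δρ k + (matAbs L).mulVec (δψ2 k) +
        (matAbs What).mulVec δw +
        (matAbs (Va - L * Vb) - matAbs (A - L * C2) * matAbs (Λ * N * V2) +
          matAbs (Λ * N * V2)).mulVec δv +
        (matAbs Λ + matAbs (Da - L * Db) - matAbs (A - L * C2) * matAbs Λ).mulVec δε) →
      (∀ k, δρ k ≤ Fρ.mulVec (e k)) → (∀ k, δψ2 k ≤ Fψ2.mulVec (e k)) →
      ∀ k, e (k + 1) ≤
        ((A + Fρ) - L * (C2 - Fψ2)).mulVec (e k) +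
        ((Va + (1 - A) * matAbs (Λ * N * V2)) -
          L * (Vb - C2 * matAbs (Λ * N * V2))).mulVec δv +
        (matAbs What).mulVec δw +
        ((Da + (1 - A) * matAbs Λ) - L * (Db - C2 * matAbs Λ)).mulVec δε) := by
  have hdet : IsUnit P.det := isUnit_iff_ne_zero.mpr hP.det_pos.ne'
  have hPinv : P⁻¹ * P = 1 := Matrix.nonsing_inv_mul _ hdet
  have hLnn : ∀ i j, 0 ≤ L i j := by
    rw [hL]; exact stieltjes_inv_mul_nonneg hP hPoff hΓ
  have key : ∀ {m : ℕ} (X : Matrix (Fin n) (Fin m) ℝ) (Y : Matrix (Fin l2) (Fin m) ℝ),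
      (∀ i j, 0 ≤ (P * X - Γ * Y) i j) → ∀ i j, 0 ≤ (X - L * Y) i j := by
    intro m X Y h
    have hXeq : X - L * Y = P⁻¹ * (P * X - Γ * Y) := by
      rw [hL, Matrix.mul_sub, ← Matrix.mul_assoc, ← Matrix.mul_assoc, hPinv, Matrix.one_mul]
    rw [hXeq]
    exact stieltjes_inv_mul_nonneg hP hPoff h
  have hA' := key A C2 hPA
  have hVa' := key Va Vb hPVa
  have hDa' := key Da Db hPDa
  refine ⟨hLnn, hA', hVa', hDa', ?_⟩
  intro e δρ δψ2 δv δw δε he hδρ hδψ2 hv hw hε hdyn hbρ hbψ k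
  have hMabsA : matAbs (A - L * C2) = A - L * C2 := matAbs_of_nonneg hA'
  have hMabsL : matAbs L = L := matAbs_of_nonneg hLnn
  have hMabsV : matAbs (Va - L * Vb) = Va - L * Vb := matAbs_of_nonneg hVa'
  have hMabsD : matAbs (Da - L * Db) = Da - L * Db := matAbs_of_nonneg hDa'
  set Q := matAbs (Λ * N * V2) with hQ
  set R := matAbs Λ with hR
  -- coefficient identities
  have idv : (Va - L * Vb) - (A - L * C2) * Q + Q
      = (Va + (1 - A) * Q) - L * (Vb - C2 * Q) := by
    simp only [Matrix.sub_mul, Matrix.mul_sub, Matrix.add_mul, Matrix.one_mul,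
      Matrix.mul_assoc]
    abel
  have idε : R + (Da - L * Db) - (A - L * C2) * R
      = (Da + (1 - A) * R) - L * (Db - C2 * R) := by
    simp only [Matrix.sub_mul, Matrix.mul_sub, Matrix.add_mul, Matrix.one_mul,
      Matrix.mul_assoc]
    abel
  have idA : (A + Fρ) - L * (C2 - Fψ2) = (A - L * C2) + (Fρ + L * Fψ2) := by
    simp only [Matrix.sub_mul, Matrix.mul_sub, Matrix.add_mul, Matrix.one_mul,
      Matrix.mul_assoc]
    abel
  rw [hdyn k, hMabsA, hMabsL, hMabsV, hMabsD, idA, idv, idε]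
  rw [Matrix.add_mulVec (A - L * C2) (Fρ + L * Fψ2), Matrix.add_mulVec Fρ (L * Fψ2)]
  have h1 : δρ k ≤ Fρ.mulVec (e k) := hbρ k
  have h2 : L.mulVec (δψ2 k) ≤ (L * Fψ2).mulVec (e k) := by
    rw [← Matrix.mulVec_mulVec]
    exact mulVec_mono hLnn (hbψ k)
  intro i
  simp only [Pi.add_apply]
  have := h1 i
  have := h2 i
  linarith
end

section
/- (Theorem 2, Case (iii).) Let P ∈ ℝ^{n×n} be symmetric positive definite with nonpositive off-diagonal entries (−P is Metzler), Γ ∈ ℝ^{n×l₂} with Γ ≥ 0, and suppose PA − ΓC₂ ≥ 0 (entrywise). Set L := P⁻¹Γ. Then L ≥ 0 and A − LC₂ ≥ 0. Moreover, for any nonnegative sequence e^x_k ∈ ℝⁿ and vectors δ^ρ_k, δ^{ψ₂}_k, δ^v, δ^w, δ^ε ≥ 0 satisfying the error-dynamics equality e^x_{k+1} = |A−LC₂|·e^x_k + δ^ρ_k + |L|·δ^{ψ₂}_k + |Ŵ|·δ^w + (|V_a − LV_b| − |A−LC₂|·|ΛNV₂| + |ΛNV₂|)·δ^v + (|Λ|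 + |D_a − LD_b| − |A−LC₂|·|Λ|)·δ^ε and the bounds δ^ρ_k ≤ F̄_ρ·e^x_k, δ^{ψ₂}_k ≤ F̄_{ψ₂}·e^x_k, it holds that e^x_{k+1} ≤ (A − LC₂ + F̄_ρ + L·F̄_{ψ₂})·e^x_k + (L·|V₂| + |ΛNV₂| + |Λ(I−NC₂)G₁SV₁|)·δ^v + |Ŵ|·δ^w + |Λ|·δ^ε. -/
open Matrix

lemma matAbs_apply {m n : ℕ} (M : Matrix (Fin m) (Fin n) ℝ) (i j) :
    matAbs M i j = |M i j| := by
  simp only [matAbs, matNeg, matPos, Matrix.add_apply, Matrix.sub_apply, Matrix.of_apply]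
  rcases le_total 0 (M i j) with h | h
  · rw [max_eq_left h, abs_of_nonneg h]; ring
  · rw [max_eq_right h, abs_of_nonpos h]; ring

lemma matAbs_eq {m n : ℕ} {M : Matrix (Fin m) (Fin n) ℝ} (h : ∀ i j, 0 ≤ M i j) :
    matAbs M = M := by
  ext i j; rw [matAbs_apply, abs_of_nonneg (h i j)]

/-- M-matrix inverse-positivity. -/
lemma mmatrix_inv_nonneg {n : ℕ} {P : Matrix (Fin n) (Fin n) ℝ} (hP : P.PosDef)
    (hPoff : ∀ i j, i ≠ j → P i j ≤ 0) (y : Fin n → ℝ) (hy : 0 ≤ y) :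
    0 ≤ P⁻¹.mulVec y := by
  have hdet : IsUnit P.det := isUnit_iff_ne_zero.mpr hP.det_pos.ne'
  set x := P⁻¹.mulVec y with hx
  have hPx : P.mulVec x = y := by
    rw [hx, Matrix.mulVec_mulVec, Matrix.mul_nonsing_inv P hdet, Matrix.one_mulVec]
  set xp : Fin n → ℝ := fun i => max (x i) 0 with hxp
  set xm : Fin n → ℝ := fun i => max (-x i) 0 with hxm
  have hxm_nonneg : ∀ i, 0 ≤ xm i := fun i => le_max_right _ _
  have hxp_nonneg : ∀ i, 0 ≤ xp i := fun i => le_max_right _ _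
  have hxsplit : ∀ j, x j = xp j - xm j := by
    intro j
    simp only [hxm, hxp]
    rcases le_total 0 (x j) with h | h
    · rw [max_eq_left h, max_eq_right (neg_nonpos.mpr h)]; ring
    · rw [max_eq_right h, max_eq_left (neg_nonneg.mpr h)]; ring
  have hdiag : ∀ i, xm i * xp i = 0 := by
    intro i
    simp only [hxm, hxp]
    rcases le_total 0 (x i) with h | h
    · rw [max_eq_right (neg_nonpos.mpr h)]; ring
    · rw [max_eq_right h]; ring
  have hxm_zero : xm = 0 := by
    by_contra hne
    have hq := hP.dotProduct_mulVec_pos (x := xm) hne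
    have hstar : star xm = xm := rfl
    rw [hstar] at hq
    have key : dotProduct xm (P *ᵥ xm) ≤ 0 := by
      have h1 : dotProduct xm (P *ᵥ x) = dotProduct xm y := by rw [hPx]
      have h2 : (0:ℝ) ≤ dotProduct xm y := by
        apply Finset.sum_nonneg
        intro i _
        exact mul_nonneg (hxm_nonneg i) (hy i)
      have h3 : dotProduct xm (P *ᵥ x)
          = (∑ i, ∑ j, xm i * P i j * xp j) - dotProduct xm (P *ᵥ xm) := by
        simp only [dotProduct, Matrix.mulVec, dotProduct]
        rw [← Finset.sum_sub_distrib]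
        congr 1; ext i
        rw [Finset.mul_sum, Finset.mul_sum, ← Finset.sum_sub_distrib]
        congr 1; ext j
        rw [hxsplit j]; ring
      have h4 : (∑ i, ∑ j, xm i * P i j * xp j) ≤ 0 := by
        apply Finset.sum_nonpos
        intro i _
        apply Finset.sum_nonpos
        intro j _
        rcases eq_or_ne i j with rfl | hij
        · have : xm i * P i i * xp i = P i i * (xm i * xp i) := by ring
          rw [this, hdiag i, mul_zero]
        · nlinarith [hPoff i j hij, hxm_nonneg i, hxp_nonneg j,
            mul_nonneg (hxm_nonneg i) (hxp_nonneg j)]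
      linarith [h3 ▸ (h1 ▸ h2)]
    linarith
  intro i
  have h0 := congrFun hxm_zero i
  simp only [hxm, Pi.zero_apply] at h0
  have h2 : -x i ≤ max (-x i) 0 := le_max_left _ _
  rw [h0] at h2
  simpa using (by linarith : (0:ℝ) ≤ x i)

lemma matAbs_nonneg' {m n : ℕ} (M : Matrix (Fin m) (Fin n) ℝ) (i j) : 0 ≤ matAbs M i j := by
  rw [matAbs_apply]; exact abs_nonneg _

lemma mulVec_mono_vec {m n : ℕ} {M : Matrix (Fin m) (Fin n) ℝ}
    (hM : ∀ i j, 0 ≤ M i j) {u v : Fin n → ℝ} (huv : u ≤ v) :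
    M.mulVec u ≤ M.mulVec v := by
  intro i
  simp only [Matrix.mulVec, dotProduct]
  apply Finset.sum_le_sum
  intro j _
  exact mul_le_mul_of_nonneg_left (huv j) (hM i j)

lemma mulVec_mono_mat {m n : ℕ} {M M' : Matrix (Fin m) (Fin n) ℝ}
    (h : ∀ i j, M i j ≤ M' i j) {v : Fin n → ℝ} (hv : 0 ≤ v) :
    M.mulVec v ≤ M'.mulVec v := by
  intro i
  simp only [Matrix.mulVec, dotProduct]
  apply Finset.sum_le_sum
  intro j _
  exact mul_le_mul_of_nonneg_right (h i j) (hv j)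

lemma matAbs_mul_le {m n p : ℕ} (A : Matrix (Fin m) (Fin n) ℝ) (B : Matrix (Fin n) (Fin p) ℝ)
    (i j) : matAbs (A * B) i j ≤ (matAbs A * matAbs B) i j := by
  rw [matAbs_apply, Matrix.mul_apply, Matrix.mul_apply]
  calc |∑ k, A i k * B k j| ≤ ∑ k, |A i k * B k j| := Finset.abs_sum_le_sum_abs _ _
    _ = ∑ k, matAbs A i k * matAbs B k j := by
        apply Finset.sum_congr rfl
        intro k _
        rw [matAbs_apply, matAbs_apply, abs_mul]

/-- Theorem 2, Case (iii): positivity of the designed gain and the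
linear comparison system for the error dynamics. -/
theorem iss_synthesis_case_iii
    {n nw nv p1 l2 : ℕ}
    (W : Matrix (Fin n) (Fin nw) ℝ) (G1 : Matrix (Fin n) (Fin p1) ℝ)
    (V1 : Matrix (Fin p1) (Fin nv) ℝ) (V2 : Matrix (Fin l2) (Fin nv) ℝ)
    (C2 : Matrix (Fin l2) (Fin n) ℝ) (S : Matrix (Fin p1) (Fin p1) ℝ)
    (A Λ : Matrix (Fin n) (Fin n) ℝ) (N : Matrix (Fin n) (Fin l2) ℝ)
    (Va : Matrix (Fin n) (Fin nv) ℝ)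
    (hVa : Va = A * Λ * N * V2 + Λ * (1 - N * C2) * G1 * S * V1)
    (Vb : Matrix (Fin l2) (Fin nv) ℝ) (hVb : Vb = (C2 * Λ * N - 1) * V2)
    (Da : Matrix (Fin n) (Fin n) ℝ) (hDa : Da = A * Λ)
    (Db : Matrix (Fin l2) (Fin n) ℝ) (hDb : Db = C2 * Λ)
    (What : Matrix (Fin n) (Fin nw) ℝ) (hWhat : What = Λ * (1 - N * C2) * W)
    (Fρ : Matrix (Fin n) (Fin n) ℝ) (Fψ2 : Matrix (Fin l2) (Fin n) ℝ)
    (hFρ : ∀ i j, 0 ≤ Fρ i j) (hFψ2 : ∀ i j, 0 ≤ Fψ2 i j)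
    (P : Matrix (Fin n) (Fin n) ℝ) (hP : P.PosDef)
    (hPoff : ∀ i j, i ≠ j → P i j ≤ 0)
    (Γ : Matrix (Fin n) (Fin l2) ℝ) (hΓ : ∀ i j, 0 ≤ Γ i j)
    (hPA : ∀ i j, 0 ≤ (P * A - Γ * C2) i j)
    (L : Matrix (Fin n) (Fin l2) ℝ) (hL : L = P⁻¹ * Γ) :
    (∀ i j, 0 ≤ L i j) ∧
    (∀ i j, 0 ≤ (A - L * C2) i j) ∧
    (∀ (e : ℕ → Fin n → ℝ) (δρ : ℕ → Fin n → ℝ) (δψ2 : ℕ → Fin l2 → ℝ)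
      (δv : Fin nv → ℝ) (δw : Fin nw → ℝ) (δε : Fin n → ℝ),
      (∀ k, 0 ≤ e k) → (∀ k, 0 ≤ δρ k) → (∀ k, 0 ≤ δψ2 k) →
      0 ≤ δv → 0 ≤ δw → 0 ≤ δε →
      (∀ k, e (k + 1) =
        (matAbs (A - L * C2)).mulVec (e k) + δρ k + (matAbs L).mulVec (δψ2 k) +
        (matAbs What).mulVec δw +
        (matAbs (Va - L * Vb) - matAbs (A - L * C2) * matAbs (Λ * N * V2) +
          matAbs (Λ * N * V2)).mulVec δv +
        (matAbs Λ + matAbs (Da - L * Db) - matAbs (A - L * C2) * matAbs Λ).mulVec δε) →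
      (∀ k, δρ k ≤ Fρ.mulVec (e k)) → (∀ k, δψ2 k ≤ Fψ2.mulVec (e k)) →
      ∀ k, e (k + 1) ≤
        (A - L * C2 + Fρ + L * Fψ2).mulVec (e k) +
        (L * matAbs V2 + matAbs (Λ * N * V2) +
          matAbs (Λ * (1 - N * C2) * G1 * S * V1)).mulVec δv +
        (matAbs What).mulVec δw +
        (matAbs Λ).mulVec δε) := by
  have hdet : IsUnit P.det := isUnit_iff_ne_zero.mpr hP.det_pos.ne'
  -- L ≥ 0
  have hLnn : ∀ i j, 0 ≤ L i j := by
    intro i j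
    have h := mmatrix_inv_nonneg hP hPoff (fun k => Γ k j) (fun k => hΓ k j)
    have hcol : L i j = (P⁻¹ *ᵥ fun k => Γ k j) i := by
      rw [hL]
      simp [Matrix.mul_apply, Matrix.mulVec, dotProduct]
    rw [hcol]
    exact h i
  have hALC : A - L * C2 = P⁻¹ * (P * A - Γ * C2) := by
    rw [hL, Matrix.mul_sub, ← Matrix.mul_assoc, ← Matrix.mul_assoc,
      Matrix.nonsing_inv_mul P hdet, Matrix.one_mul]
  have hQnn : ∀ i j, 0 ≤ (A - L * C2) i j := by
    intro i j
    have h := mmatrix_inv_nonneg hP hPoff (fun k => (P * A - Γ * C2) k j)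
      (fun k => hPA k j)
    have hcol : (A - L * C2) i j = (P⁻¹ *ᵥ fun k => (P * A - Γ * C2) k j) i := by
      rw [hALC]
      simp [Matrix.mul_apply, Matrix.mulVec, dotProduct]
    rw [hcol]
    exact h i
  refine ⟨hLnn, hQnn, ?_⟩
  intro e δρ δψ2 δv δw δε he hδρ hδψ hδv hδw hδε hdyn hbρ hbψ k
  have hAbsQ : matAbs (A - L * C2) = A - L * C2 := matAbs_eq hQnn
  have hAbsL : matAbs L = L := matAbs_eq hLnn
  have hVaLVb : Va - L * Vb =
      (A - L * C2) * (Λ * N * V2) + L * V2 + Λ * (1 - N * C2) * G1 * S * V1 := by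
    rw [hVa, hVb]
    simp only [Matrix.sub_mul, Matrix.mul_sub, Matrix.add_mul, Matrix.mul_add,
      Matrix.one_mul, Matrix.mul_one, Matrix.mul_assoc]
    abel
  have hDaDb : Da - L * Db = (A - L * C2) * Λ := by
    rw [hDa, hDb, Matrix.sub_mul, Matrix.mul_assoc]
  -- δv coefficient bound (entrywise)
  have hCv : ∀ i j,
      (matAbs (Va - L * Vb) - matAbs (A - L * C2) * matAbs (Λ * N * V2) +
        matAbs (Λ * N * V2)) i j ≤
      ((L * matAbs V2 + matAbs (Λ * N * V2) +
        matAbs (Λ * (1 - N * C2) * G1 * S * V1) : Matrix (Fin n) (Fin nv) ℝ)) i j := by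
    intro i j
    have tri : matAbs (Va - L * Vb) i j ≤
        matAbs ((A - L * C2) * (Λ * N * V2)) i j + matAbs (L * V2) i j +
          matAbs (Λ * (1 - N * C2) * G1 * S * V1) i j := by
      rw [hVaLVb]
      simp only [matAbs_apply, Matrix.add_apply]
      exact abs_add_three _ _ _
    have h1 := matAbs_mul_le (A - L * C2) (Λ * N * V2) i j
    rw [hAbsQ] at h1
    have h2 := matAbs_mul_le L V2 i j
    rw [hAbsL] at h2
    simp only [Matrix.add_apply, Matrix.sub_apply, hAbsQ]
    linarith
  -- δε coefficient bound (entrywise)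
  have hCε : ∀ i j,
      (matAbs Λ + matAbs (Da - L * Db) - matAbs (A - L * C2) * matAbs Λ) i j ≤
      matAbs Λ i j := by
    intro i j
    have h1 := matAbs_mul_le (A - L * C2) Λ i j
    rw [hAbsQ] at h1
    rw [hDaDb]
    simp only [Matrix.add_apply, Matrix.sub_apply, hAbsQ]
    linarith
  -- component inequalities
  have t2 : (matAbs L).mulVec (δψ2 k) ≤ (L * Fψ2).mulVec (e k) := by
    rw [hAbsL, ← Matrix.mulVec_mulVec]
    exact mulVec_mono_vec hLnn (hbψ k)
  have t3 := mulVec_mono_mat hCv hδv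
  have t4 := mulVec_mono_mat hCε hδε
  simp only [hAbsQ] at t3 t4
  rw [hdyn k]
  intro i
  have hsplit : ((A - L * C2 + Fρ + L * Fψ2) *ᵥ e k) i =
      ((A - L * C2) *ᵥ e k) i + (Fρ *ᵥ e k) i + ((L * Fψ2) *ᵥ e k) i := by
    rw [Matrix.add_mulVec, Matrix.add_mulVec]
    simp [Pi.add_apply]
  simp only [Pi.add_apply, hAbsQ]
  rw [hsplit]
  have := hbρ k i
  have := t2 i
  have := t3 i
  have := t4 i
  linarith
end
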